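/- Let F be a minimal spanning entering forest of V with k trees (F ∈ F̃^k), let s ∈ K_F be one of its roots, and put S = V(T^F_s), the vertex set of the tree of F rooted at s. Then μ°_S = λ°_S. -/

import Mathlib

open scoped Classical

namespace BarrierForests

variable {α : Type*} [Fintype α] [DecidableEq α]

/-- Total weight of a set of arcs. -/
def aweight (v : α → α → ℝ) (A : Finset (α × α)) : ℝ := ∑ a ∈ A, v a.1 a.2

/-- Weight `Υ^A_S` of the arcs of `A` whose tail lies in `S`. -/
def aweightOn (v : α → α → ℝ) (A : Finset (α × α)) (S : Finset α) : ℝ :=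
  ∑ a ∈ A.filter (fun a => a.1 ∈ S), v a.1 a.2

/-- The relation "there is an arc from `i` to `j` in `A`". -/
def arcRel (A : Finset (α × α)) : α → α → Prop := fun i j => (i, j) ∈ A

/-- Entering forest: every vertex has out-degree at most one, and there are no
directed cycles. -/
def IsEForest (A : Finset (α × α)) : Prop :=
  (∀ i j j', (i, j) ∈ A → (i, j') ∈ A → j = j') ∧
  ∀ i, ¬ Relation.TransGen (arcRel A) i i

/-- Roots of a (spanning) entering forest: the vertices with no outgoing arc. -/
noncomputable def rootSet (A : Finset (α × α)) : Finset α :=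
  Finset.univ.filter fun i => ∀ j, (i, j) ∉ A

/-- `𝓕^k`: spanning entering forests of the digraph with arc set `E`
having exactly `k` trees (equivalently, `k` roots). -/
def FSet (E : Finset (α × α)) (k : ℕ) : Set (Finset (α × α)) :=
  {A | A ⊆ E ∧ IsEForest A ∧ (rootSet A).card = k}

/-- The infimum (in `EReal`, so `⊤` for the empty family) of the `w`-weights of the
members of `s`. -/
noncomputable def minW {β : Type*} (s : Set β) (w : β → ℝ) : EReal :=
  sInf ((fun x => (w x : EReal)) '' s)

/-- `φ^k`: minimum weight of a spanning entering forest with `k` trees. -/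
noncomputable def phi (v : α → α → ℝ) (E : Finset (α × α)) (k : ℕ) : EReal :=
  minW (FSet E k) (aweight v)

/-- `F ∈ 𝓕̃^k`: minimal spanning entering forest with `k` trees. -/
def IsMinForest (v : α → α → ℝ) (E : Finset (α × α)) (k : ℕ) (F : Finset (α × α)) : Prop :=
  F ∈ FSet E k ∧ (aweight v F : EReal) = phi v E k

/-- Vertex set of the tree `T^F_i` of the entering forest `F` rooted at `i`:
all vertices from which `i` is reachable. -/
noncomputable def treeVerts (F : Finset (α × α)) (i : α) : Finset α :=
  Finset.univ.filter fun j => Relation.ReflTransGen (arcRel F) j i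

/-- Arc set of the tree `T^F_i`. -/
noncomputable def treeArcs (F : Finset (α × α)) (i : α) : Finset (α × α) :=
  F.filter fun a => a.1 ∈ treeVerts F i

/-- Induced subgraph (restriction) of the arc set `A` on the vertex set `S`. -/
def restrictArcs (A : Finset (α × α)) (S : Finset α) : Finset (α × α) :=
  A.filter fun a => a.1 ∈ S ∧ a.2 ∈ S

/-- `T ∈ 𝓣^{•q}_S`: `T` is an entering tree that is a subgraph of the digraph with
arc set `E`, with vertex set `S` and root `q`. -/
def IsTreeOn (E T : Finset (α × α)) (S : Finset α) (q : α) : Prop :=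
  q ∈ S ∧ T ⊆ E ∧ (∀ a ∈ T, a.1 ∈ S ∧ a.2 ∈ S) ∧
  (∀ i ∈ S, i ≠ q → ∃! j, (i, j) ∈ T) ∧
  (∀ j, (q, j) ∉ T) ∧
  ∀ i ∈ S, Relation.ReflTransGen (arcRel T) i q

/-- `λ^{•q}_S`. -/
noncomputable def lamB (v : α → α → ℝ) (E : Finset (α × α)) (S : Finset α) (q : α) : EReal :=
  minW {T | IsTreeOn E T S q} (aweight v)

/-- `λ^•_S = min_{q ∈ S} λ^{•q}_S`. -/
noncomputable def lamBul (v : α → α → ℝ) (E : Finset (α × α)) (S : Finset α) : EReal :=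
  minW {T | ∃ q ∈ S, IsTreeOn E T S q} (aweight v)

/-- `T ∈ 𝓣^{∘q}_S`: `T` has `|S| + 1` vertices, `T|_S` is an entering tree with vertex
set `S` and root `q`, and the single arc of `T` leaving `S` goes from `q` to the root
`r ∉ S` of `T`. -/
def IsCTreeOn (E T : Finset (α × α)) (S : Finset α) (q : α) : Prop :=
  ∃ r, r ∉ S ∧ ∃ T', IsTreeOn E T' S q ∧ (q, r) ∈ E ∧ T = insert (q, r) T'

/-- `λ^{∘q}_S`. -/
noncomputable def lamC (v : α → α → ℝ) (E : Finset (α × α)) (S : Finset α) (q : α) : EReal :=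
  minW {T | IsCTreeOn E T S q} (aweight v)

/-- `λ^∘_S = min_{q ∈ S} λ^{∘q}_S`. -/
noncomputable def lamCirc (v : α → α → ℝ) (E : Finset (α × α)) (S : Finset α) : EReal :=
  minW {T | ∃ q ∈ S, IsCTreeOn E T S q} (aweight v)

/-- `μ^∘_S`: minimum of `Υ^F_S` over the spanning entering forests `F ∈ 𝓕^∘_S`,
i.e. those in which every vertex of `S` has an outgoing arc. -/
noncomputable def muCirc (v : α → α → ℝ) (E : Finset (α × α)) (S : Finset α) : EReal :=
  minW {A | A ⊆ E ∧ IsEForest A ∧ ∀ i ∈ S, ∃ j, (i, j) ∈ A} fun A => aweightOn v A S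

/-- `G ∈ 𝓡^F_y`: `G` is a descendant of `F` at the root `y`, i.e. `y` is a root of
`F`, the roots of `G` are those of `F` except `y`, `G` induces `T^F_q` on the vertex
set of every tree of `F` other than `T^F_y`, and `G` induces a tree on the vertex set
of `T^F_y`. -/
def IsDescendant (E F G : Finset (α × α)) (y : α) : Prop :=
  y ∈ rootSet F ∧ rootSet G = rootSet F \ {y} ∧
  (∀ q ∈ rootSet G, restrictArcs G (treeVerts F q) = treeArcs F q) ∧
  ∃ a ∈ treeVerts F y, IsTreeOn E (restrictArcs G (treeVerts F y)) (treeVerts F y) a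

/-- A potential graph: a connected weighted undirected graph with a loop at every
vertex.  Edges are recorded as a symmetric reflexive set of ordered pairs, with a
symmetric weight function `p`. -/
structure PotGraph (α : Type*) [Fintype α] [DecidableEq α] where
  p : α → α → ℝ
  edges : Finset (α × α)
  symm_mem : ∀ i j, (i, j) ∈ edges → (j, i) ∈ edges
  loop_mem : ∀ i, (i, i) ∈ edges
  symm_w : ∀ i j, p i j = p j i
  connected : ∀ i j : α, Relation.ReflTransGen (fun a b => (a, b) ∈ edges ∧ a ≠ b) i j

/-- Arc set of the barrier digraph of the potential graph `P`: an arc `(i,j)`, `i ≠ j`,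
for each non-loop edge of `P`. -/
def barcs (P : PotGraph α) : Finset (α × α) := P.edges.filter fun a => a.1 ≠ a.2

/-- Arc weights of the barrier digraph: `v i j = p i j - p i i`. -/
def bw (P : PotGraph α) : α → α → ℝ := fun i j => P.p i j - P.p i i

/-- Weight of a set of undirected edges of `P`. -/
noncomputable def uweight (P : PotGraph α) (T : Finset (Sym2 α)) : ℝ :=
  ∑ e ∈ T, Sym2.lift ⟨P.p, P.symm_w⟩ e

/-- `T ∈ 𝓣_S`: `T` is an undirected tree that is a subgraph of `P` (loops unused)
with vertex set `S`: its edges are non-loop edges of `P` joining vertices of `S`,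
it is connected on `S`, and it has `|S| - 1` edges. -/
def IsUTreeOn (P : PotGraph α) (T : Finset (Sym2 α)) (S : Finset α) : Prop :=
  (∀ e ∈ T, ∃ i j, i ≠ j ∧ e = s(i, j) ∧ (i, j) ∈ P.edges ∧ i ∈ S ∧ j ∈ S) ∧
  (∀ i ∈ S, ∀ j ∈ S, Relation.ReflTransGen (fun a b => s(a, b) ∈ T) i j) ∧
  T.card + 1 = S.card

/-- `ν_S`: minimum weight of an undirected tree on `S` that is a subgraph of `P`. -/
noncomputable def nu (P : PotGraph α) (S : Finset α) : EReal :=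
  minW {T | IsUTreeOn P T S} (uweight P)

/-- The underlying undirected edge set of a set of arcs. -/
def undir (A : Finset (α × α)) : Finset (Sym2 α) := A.image fun a => s(a.1, a.2)

/-- `Tq` is the entering tree (with root `q`, vertex set `S`, subgraph of the barrier
digraph of `P`) corresponding to the undirected tree `T`: it is obtained from `T` by
directing all edges toward `q` and replacing the weight of each arc `(i,j)` by
`v i j = p i j - p i i`. -/
def Corresponds (P : PotGraph α) (Tq : Finset (α × α)) (T : Finset (Sym2 α))
    (S : Finset α) (q : α) : Prop :=
  IsTreeOn (barcs P) Tq S q ∧ undir Tq = T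

-- ### Auxiliary lemmas

/-- A finite acyclic relation is well-founded in the forward direction. -/
lemma acyclic_wf {r : α → α → Prop} (h : ∀ i, ¬ Relation.TransGen r i i) :
    WellFounded (fun a b : α => Relation.TransGen r b a) := by
  haveI : IsTrans α (fun a b : α => Relation.TransGen r b a) :=
    ⟨fun a b c hab hbc => hbc.trans hab⟩
  haveI : IsIrrefl α (fun a b : α => Relation.TransGen r b a) := ⟨fun a ha => h a ha⟩
  exact Finite.wellFounded_of_trans_of_irrefl _

lemma transGen_first {r : α → α → Prop} {a b : α} (h : Relation.TransGen r a b) :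
    ∃ c, r a c ∧ Relation.ReflTransGen r c b := by
  induction h with
  | single h => exact ⟨_, h, Relation.ReflTransGen.refl⟩
  | tail h1 h2 ih =>
      obtain ⟨c, hc, hcb⟩ := ih
      exact ⟨c, hc, hcb.tail h2⟩

/-- An entering tree on `S` has no directed cycles. -/
lemma isTreeOn_acyclic {E T : Finset (α × α)} {S : Finset α} {q : α}
    (hT : IsTreeOn E T S q) : ∀ i, ¬ Relation.TransGen (arcRel T) i i := by
  obtain ⟨hqS, hTE, hends, huniq, hqno, hreach⟩ := hT
  intro i hi
  have hiS : i ∈ S := by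
    obtain ⟨b, hb, -⟩ := transGen_first hi
    exact (hends _ hb).1
  refine Relation.ReflTransGen.head_induction_on
    (motive := fun a (_ : Relation.ReflTransGen (arcRel T) a q) =>
      Relation.TransGen (arcRel T) a a → False) (hreach i hiS) ?_ ?_ hi
  · intro hcyc
    obtain ⟨b, hb, -⟩ := transGen_first hcyc
    exact hqno b hb
  · intro a c h' hcq ih hcyc
    obtain ⟨b, hb, hba⟩ := transGen_first hcyc
    have haS : a ∈ S := (hends _ hb).1
    have haq : a ≠ q := fun h => hqno b (h ▸ hb)
    obtain ⟨w, -, hw⟩ := huniq a haS haq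
    have hbc : b = c := (hw b hb).trans (hw c h').symm
    subst hbc
    exact ih (Relation.TransGen.tail' hba h')
set_option linter.unusedSectionVars false

section FFacts

variable {v : α → α → ℝ} {E F : Finset (α × α)} {s : α}

/-- Arcs of `F` whose head lies in the tree of `s` have tail in it too. -/
lemma head_mem_treeVerts {i j : α} (hij : (i, j) ∈ F) (hj : j ∈ treeVerts F s) :
    i ∈ treeVerts F s := by
  simp only [treeVerts, Finset.mem_filter, Finset.mem_univ, true_and] at hj ⊢
  exact Relation.ReflTransGen.head hij hj

lemma self_mem_treeVerts : s ∈ treeVerts F s := by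
  simp only [treeVerts, Finset.mem_filter, Finset.mem_univ, true_and]
  exact Relation.ReflTransGen.refl

/-- If `s` is a root, arcs of `F` whose tail lies in the tree of `s` have head in it. -/
lemma tail_mem_treeVerts (hroot : ∀ j, (s, j) ∉ F)
    (hfun : ∀ i j j', (i, j) ∈ F → (i, j') ∈ F → j = j')
    {i j : α} (hij : (i, j) ∈ F) (hi : i ∈ treeVerts F s) : j ∈ treeVerts F s := by
  simp only [treeVerts, Finset.mem_filter, Finset.mem_univ, true_and] at hi ⊢
  rcases hi.cases_head with rfl | ⟨c, hc, hcs⟩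
  · exact absurd hij (hroot j)
  · rwa [hfun i j c hij hc]

lemma exists_arc_of_mem_treeVerts {i : α} (hi : i ∈ treeVerts F s) (hne : i ≠ s) :
    ∃ j, (i, j) ∈ F := by
  simp only [treeVerts, Finset.mem_filter, Finset.mem_univ, true_and] at hi
  rcases hi.cases_head with rfl | ⟨c, hc, -⟩
  · exact absurd rfl hne
  · exact ⟨c, hc⟩

/-- Direction `μ ≤ λ`. -/
lemma muCirc_le_lamCirc (v : α → α → ℝ) (E F : Finset (α × α))
    (hFE : F ⊆ E) (hfun : ∀ i j j', (i, j) ∈ F → (i, j') ∈ F → j = j')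
    (hacyc : ∀ i, ¬ Relation.TransGen (arcRel F) i i)
    (s : α) (hroot : ∀ j, (s, j) ∉ F) :
    muCirc v E (treeVerts F s) ≤ lamCirc v E (treeVerts F s) := by
  set S := treeVerts F s with hSdef
  apply sInf_le_sInf_of_isCoinitialFor
  rintro x ⟨T, ⟨q, hqS, r, hrS, T', hT', hqrE, rfl⟩, rfl⟩
  obtain ⟨hq, hT'E, hT'ends, hT'uniq, hT'qno, hT'reach⟩ := hT'
  set A : Finset (α × α) := insert (q, r) T' ∪ F.filter (fun a => a.1 ∉ S) with hAdef
  -- basic membership facts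
  have hTtail : ∀ a ∈ insert (q, r) T', a.1 ∈ S := by
    intro a ha
    rcases Finset.mem_insert.mp ha with rfl | ha
    · exact hqS
    · exact (hT'ends a ha).1
  have harcs : ∀ {i j : α}, (i, j) ∈ A → i ∈ S → (i, j) ∈ insert (q, r) T' := by
    intro i j hij hi
    rcases Finset.mem_union.mp hij with h | h
    · exact h
    · exact absurd hi (Finset.mem_filter.mp h).2
  have harcs' : ∀ {i j : α}, (i, j) ∈ A → i ∉ S → (i, j) ∈ F ∧ j ∉ S := by
    intro i j hij hi
    rcases Finset.mem_union.mp hij with h | h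
    · exact absurd (hTtail _ h) hi
    · have hF := (Finset.mem_filter.mp h).1
      exact ⟨hF, fun hjS => hi (head_mem_treeVerts hF hjS)⟩
  -- arcs of A landing in S come from T'
  have hinto : ∀ {i j : α}, (i, j) ∈ A → j ∈ S → (i, j) ∈ T' := by
    intro i j hij hj
    rcases Finset.mem_union.mp hij with h | h
    · rcases Finset.mem_insert.mp h with h' | h'
      · have : j = r := congrArg Prod.snd h'
        exact absurd (this ▸ hj) hrS
      · exact h'
    · have hF := (Finset.mem_filter.mp h).1
      exact absurd (head_mem_treeVerts hF hj) (Finset.mem_filter.mp h).2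
  refine ⟨_, ⟨A, ⟨?_, ⟨?_, ?_⟩, ?_⟩, rfl⟩, ?_⟩
  · -- A ⊆ E
    intro a ha
    rcases Finset.mem_union.mp ha with h | h
    · rcases Finset.mem_insert.mp h with rfl | h'
      · exact hqrE
      · exact hT'E h'
    · exact hFE (Finset.mem_filter.mp h).1
  · -- functional
    intro i j j' hj hj'
    by_cases hi : i ∈ S
    · have h1 := harcs hj hi
      have h2 := harcs hj' hi
      by_cases hiq : i = q
      · subst hiq
        have e1 : j = r := by
          rcases Finset.mem_insert.mp h1 with h | h
          · exact congrArg Prod.snd h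
          · exact absurd h (hT'qno j)
        have e2 : j' = r := by
          rcases Finset.mem_insert.mp h2 with h | h
          · exact congrArg Prod.snd h
          · exact absurd h (hT'qno j')
        rw [e1, e2]
      · have h1' : (i, j) ∈ T' := by
          rcases Finset.mem_insert.mp h1 with h | h
          · exact absurd (congrArg Prod.fst h) hiq
          · exact h
        have h2' : (i, j') ∈ T' := by
          rcases Finset.mem_insert.mp h2 with h | h
          · exact absurd (congrArg Prod.fst h) hiq
          · exact h
        obtain ⟨w, -, hw⟩ := hT'uniq i hi hiq
        exact (hw j h1').trans (hw j' h2').symm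
    · exact hfun i j j' (harcs' hj hi).1 (harcs' hj' hi).1
  · -- acyclic
    intro i hi
    by_cases hiS : i ∈ S
    · -- the cycle stays in S and uses only T' arcs
      have key : ∀ j, Relation.TransGen (arcRel A) i j → j ∈ S →
          Relation.TransGen (arcRel T') i j := by
        intro j h
        induction h with
        | single h => exact fun hj => Relation.TransGen.single (hinto h hj)
        | tail h1 h2 ih =>
            intro hj
            have h2' := hinto h2 hj
            exact (ih (hT'ends _ h2').1).tail h2'
      exact isTreeOn_acyclic ⟨hq, hT'E, hT'ends, hT'uniq, hT'qno, hT'reach⟩ i (key i hi hiS)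
    · have key : ∀ a j, Relation.TransGen (arcRel A) a j → a ∉ S →
          Relation.TransGen (arcRel F) a j := by
        intro a j h
        refine Relation.TransGen.head_induction_on
          (motive := fun b (_ : Relation.TransGen (arcRel A) b j) =>
            b ∉ S → Relation.TransGen (arcRel F) b j) h ?_ ?_
        · intro b hb hbS
          exact Relation.TransGen.single (harcs' hb hbS).1
        · intro b c h' _ ih hbS
          obtain ⟨hbF, hcS⟩ := harcs' h' hbS
          exact (ih hcS).head hbF
      exact hacyc i (key i i hi hiS)
  · -- out-arcs on S
    intro i hiS
    by_cases hiq : i = q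
    · exact ⟨r, Finset.mem_union.mpr (Or.inl (hiq ▸ Finset.mem_insert_self _ _))⟩
    · obtain ⟨j, hj, -⟩ := hT'uniq i hiS hiq
      exact ⟨j, Finset.mem_union.mpr (Or.inl (Finset.mem_insert_of_mem hj))⟩
  · -- weight
    have hfil : A.filter (fun a => a.1 ∈ S) = insert (q, r) T' := by
      ext a
      simp only [Finset.mem_filter, hAdef, Finset.mem_union]
      constructor
      · rintro ⟨h | h, hS⟩
        · exact h
        · exact absurd hS h.2
      · intro h
        exact ⟨Or.inl h, hTtail _ h⟩
    have : aweightOn v A S = aweight v (insert (q, r) T') := by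
      rw [aweightOn, hfil]; rfl
    show ((aweightOn v A S : ℝ) : EReal) ≤ ((aweight v (insert (q, r) T') : ℝ) : EReal)
    exact_mod_cast le_of_eq this

end FFacts
set_option maxHeartbeats 2000000 in
/-- Direction `λ ≤ μ`, using minimality of `F`. -/
lemma lamCirc_le_muCirc (v : α → α → ℝ) (E : Finset (α × α)) (k : ℕ)
    (F : Finset (α × α)) (hF : IsMinForest v E k F) (s : α) (hs : s ∈ rootSet F) :
    lamCirc v E (treeVerts F s) ≤ muCirc v E (treeVerts F s) := by
  classical
  obtain ⟨⟨hFE, ⟨hfun, hacyc⟩, hkcard⟩, hmin⟩ := hF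
  have hroot : ∀ j, (s, j) ∉ F := by
    simpa [rootSet] using hs
  set S := treeVerts F s with hSdef
  have hsS : s ∈ S := self_mem_treeVerts
  apply sInf_le_sInf_of_isCoinitialFor
  rintro x ⟨A, ⟨hAE, ⟨hAfun, hAacyc⟩, hAout⟩, rfl⟩
  -- the successor function of `A` on `S`
  set f : α → α := fun x => if h : ∃ j, (x, j) ∈ A then h.choose else x with hfdef
  have hfA : ∀ x, (∃ j, (x, j) ∈ A) → (x, f x) ∈ A := by
    intro x hx
    simp only [hfdef, dif_pos hx]
    exact hx.choose_spec
  have hfS : ∀ x, x ∈ S → (x, f x) ∈ A := fun x hx => hfA x (hAout x hx)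
  have hfuniq : ∀ x j, (x, j) ∈ A → j = f x := fun x j hj =>
    hAfun x j (f x) hj (hfA x ⟨j, hj⟩)
  set ρ : α → α → Prop := fun a b => (a, b) ∈ A ∧ a ∈ S ∧ b ∈ S with hρdef
  have hwfA := acyclic_wf hAacyc
  -- from `s` we can reach an exit vertex of `S`
  have hC1 : ∀ x, x ∈ S → ∃ q, Relation.ReflTransGen ρ x q ∧ q ∈ S ∧ f q ∉ S := by
    intro x
    induction x using hwfA.induction with
    | _ y ih =>
      intro hy
      by_cases hfy : f y ∈ S
      · obtain ⟨q, hq, hqS, hqe⟩ := ih (f y) (Relation.TransGen.single (hfS y hy)) hfy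
        exact ⟨q, Relation.ReflTransGen.head ⟨hfS y hy, hy, hfy⟩ hq, hqS, hqe⟩
      · exact ⟨y, Relation.ReflTransGen.refl, hy, hfy⟩
  obtain ⟨q, hsq, hqS, hqexit⟩ := hC1 s hsS
  set X : Finset α := S.filter (fun x => Relation.ReflTransGen ρ x q) with hXdef
  have hXS : ∀ x ∈ X, x ∈ S := fun x hx => (Finset.mem_filter.mp hx).1
  have hsX : s ∈ X := Finset.mem_filter.mpr ⟨hsS, hsq⟩
  have hqX : q ∈ X := Finset.mem_filter.mpr ⟨hqS, Relation.ReflTransGen.refl⟩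
  have hXstep : ∀ x, x ∈ X → x ≠ q → f x ∈ X := by
    intro x hx hne
    obtain ⟨hxS, hrtg⟩ := Finset.mem_filter.mp hx
    rcases hrtg.cases_head with rfl | ⟨y, hy, hyq⟩
    · exact absurd rfl hne
    · have hyf : y = f x := hfuniq x y hy.1
      exact Finset.mem_filter.mpr ⟨hyf ▸ hy.2.2, hyf ▸ hyq⟩
  -- the entering tree `T'` on `S` with root `q`
  set T' : Finset (α × α) :=
    A.filter (fun a => a.1 ∈ X ∧ a.1 ≠ q) ∪ F.filter (fun a => a.1 ∈ S ∧ a.1 ∉ X)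
    with hT'def
  set N : Finset (α × α) :=
    F.filter (fun a => a.1 ∉ S ∨ a.1 ∈ X) ∪ A.filter (fun a => a.1 ∈ S ∧ a.1 ∉ X)
    with hNdef
  have hT'X : ∀ {i j}, (i, j) ∈ T' → i ∈ X → (i, j) ∈ A ∧ j ∈ X ∧ i ≠ q := by
    intro i j h hiX
    rcases Finset.mem_union.mp h with h | h
    · obtain ⟨hA', hiX', hne⟩ := Finset.mem_filter.mp h
      have hjf : j = f i := hfuniq i j hA'
      exact ⟨hA', hjf ▸ hXstep i hiX' hne, hne⟩
    · exact absurd hiX (Finset.mem_filter.mp h).2.2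
  have hT'nX : ∀ {i j}, (i, j) ∈ T' → i ∉ X → (i, j) ∈ F ∧ i ∈ S ∧ j ∈ S := by
    intro i j h hiX
    rcases Finset.mem_union.mp h with h | h
    · exact absurd (Finset.mem_filter.mp h).2.1 hiX
    · obtain ⟨hF', hiS, -⟩ := Finset.mem_filter.mp h
      exact ⟨hF', hiS, tail_mem_treeVerts hroot hfun hF' hiS⟩
  have hT'ends : ∀ a ∈ T', a.1 ∈ S ∧ a.2 ∈ S := by
    rintro ⟨i, j⟩ h
    by_cases hiX : i ∈ X
    · obtain ⟨-, hjX, -⟩ := hT'X h hiX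
      exact ⟨hXS _ hiX, hXS _ hjX⟩
    · obtain ⟨-, hiS, hjS⟩ := hT'nX h hiX
      exact ⟨hiS, hjS⟩
  have hT'sub : T' ⊆ E := by
    intro a ha
    rcases Finset.mem_union.mp ha with h | h
    · exact hAE (Finset.mem_filter.mp h).1
    · exact hFE (Finset.mem_filter.mp h).1
  have hT'arc : ∀ i, i ∈ S → i ≠ q → ∃ j, (i, j) ∈ T' := by
    intro i hiS hne
    by_cases hiX : i ∈ X
    · exact ⟨f i, Finset.mem_union.mpr (Or.inl (Finset.mem_filter.mpr ⟨hfS i hiS, hiX, hne⟩))⟩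
    · have hns : i ≠ s := fun h => hiX (h ▸ hsX)
      obtain ⟨j, hj⟩ := exists_arc_of_mem_treeVerts hiS hns
      exact ⟨j, Finset.mem_union.mpr (Or.inr (Finset.mem_filter.mpr ⟨hj, hiS, hiX⟩))⟩
  have hT'fun : ∀ i j j', (i, j) ∈ T' → (i, j') ∈ T' → j = j' := by
    intro i j j' h1 h2
    by_cases hiX : i ∈ X
    · exact hAfun i j j' (hT'X h1 hiX).1 (hT'X h2 hiX).1
    · exact hfun i j j' (hT'nX h1 hiX).1 (hT'nX h2 hiX).1
  have hT'qno : ∀ j, (q, j) ∉ T' := by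
    intro j h
    rcases Finset.mem_union.mp h with h | h
    · exact (Finset.mem_filter.mp h).2.2 rfl
    · exact (Finset.mem_filter.mp h).2.2 hqX
  have hinX : ∀ {i j}, Relation.TransGen (arcRel T') i j → i ∈ X →
      Relation.TransGen (arcRel A) i j ∧ j ∈ X := by
    intro i j h
    refine Relation.TransGen.head_induction_on
      (motive := fun b (_ : Relation.TransGen (arcRel T') b j) =>
        b ∈ X → Relation.TransGen (arcRel A) b j ∧ j ∈ X) h ?_ ?_
    · intro b hb hbX
      obtain ⟨hA', hjX, -⟩ := hT'X hb hbX
      exact ⟨Relation.TransGen.single hA', hjX⟩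
    · intro b c h' hcj ih hbX
      obtain ⟨hA', hcX, -⟩ := hT'X h' hbX
      obtain ⟨tg, hjX⟩ := ih hcX
      exact ⟨tg.head hA', hjX⟩
  have hT'acyc : ∀ i, ¬ Relation.TransGen (arcRel T') i i := by
    intro i hi
    by_cases hiX : i ∈ X
    · exact hAacyc i (hinX hi hiX).1
    · have hnx : ∀ {a j}, Relation.TransGen (arcRel T') a j → a ∉ X →
          (j ∈ X ∨ Relation.TransGen (arcRel F) a j) := by
        intro a j h
        refine Relation.TransGen.head_induction_on
          (motive := fun b (_ : Relation.TransGen (arcRel T') b j) =>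
            b ∉ X → (j ∈ X ∨ Relation.TransGen (arcRel F) b j)) h ?_ ?_
        · intro b hb hbX
          by_cases hjX : j ∈ X
          · exact Or.inl hjX
          · exact Or.inr (Relation.TransGen.single (hT'nX hb hbX).1)
        · intro b c h' hcj ih hbX
          by_cases hcX : c ∈ X
          · exact Or.inl (hinX hcj hcX).2
          · rcases ih hcX with h | h
            · exact Or.inl h
            · exact Or.inr (h.head (hT'nX h' hbX).1)
      rcases hnx hi hiX with h | h
      · exact hiX h
      · exact hacyc i h
  have hT'reach : ∀ i ∈ S, Relation.ReflTransGen (arcRel T') i q := by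
    have hwf := acyclic_wf hT'acyc
    intro i
    induction i using hwf.induction with
    | _ y ih =>
      intro hy
      by_cases hyq : y = q
      · exact hyq ▸ Relation.ReflTransGen.refl
      · obtain ⟨j, hj⟩ := hT'arc y hy hyq
        have hjS : j ∈ S := (hT'ends _ hj).2
        exact Relation.ReflTransGen.head hj (ih j (Relation.TransGen.single hj) hjS)
  have hTree : IsTreeOn E T' S q :=
    ⟨hqS, hT'sub, hT'ends,
      fun i hiS hne => by
        obtain ⟨j, hj⟩ := hT'arc i hiS hne
        exact ⟨j, hj, fun y hy => hT'fun i y j hy hj⟩,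
      hT'qno, hT'reach⟩
  -- the comparison forest `N`
  have hNP_out : ∀ {i j}, (i, j) ∈ N → i ∉ S → (i, j) ∈ F ∧ j ∉ S := by
    intro i j h hiS
    rcases Finset.mem_union.mp h with h | h
    · have hF' := (Finset.mem_filter.mp h).1
      exact ⟨hF', fun hj => hiS (head_mem_treeVerts hF' hj)⟩
    · exact absurd (Finset.mem_filter.mp h).2.1 hiS
  have hNP_mid : ∀ {i j}, (i, j) ∈ N → i ∈ S → i ∉ X → (i, j) ∈ A ∧ j ∉ X := by
    intro i j h hiS hiX
    rcases Finset.mem_union.mp h with h | h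
    · rcases (Finset.mem_filter.mp h).2 with h' | h'
      · exact absurd hiS h'
      · exact absurd h' hiX
    · have hA' := (Finset.mem_filter.mp h).1
      refine ⟨hA', fun hjX => hiX ?_⟩
      exact Finset.mem_filter.mpr ⟨hiS,
        Relation.ReflTransGen.head ⟨hA', hiS, hXS _ hjX⟩ (Finset.mem_filter.mp hjX).2⟩
  have hNP_in : ∀ {i j}, (i, j) ∈ N → i ∈ X → (i, j) ∈ F ∧ j ∈ S := by
    intro i j h hiX
    rcases Finset.mem_union.mp h with h | h
    · have hF' := (Finset.mem_filter.mp h).1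
      exact ⟨hF', tail_mem_treeVerts hroot hfun hF' (hXS _ hiX)⟩
    · exact absurd hiX (Finset.mem_filter.mp h).2.2
  have hNsub : N ⊆ E := by
    intro a ha
    rcases Finset.mem_union.mp ha with h | h
    · exact hFE (Finset.mem_filter.mp h).1
    · exact hAE (Finset.mem_filter.mp h).1
  have hNfun : ∀ i j j', (i, j) ∈ N → (i, j') ∈ N → j = j' := by
    intro i j j' h1 h2
    by_cases hiS : i ∈ S
    · by_cases hiX : i ∈ X
      · exact hfun i j j' (hNP_in h1 hiX).1 (hNP_in h2 hiX).1
      · exact hAfun i j j' (hNP_mid h1 hiS hiX).1 (hNP_mid h2 hiS hiX).1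
    · exact hfun i j j' (hNP_out h1 hiS).1 (hNP_out h2 hiS).1
  have hNout : ∀ {i j}, Relation.TransGen (arcRel N) i j → i ∉ S →
      Relation.TransGen (arcRel F) i j ∧ j ∉ S := by
    intro i j h
    refine Relation.TransGen.head_induction_on
      (motive := fun b (_ : Relation.TransGen (arcRel N) b j) =>
        b ∉ S → Relation.TransGen (arcRel F) b j ∧ j ∉ S) h ?_ ?_
    · intro b hb hbS
      obtain ⟨hF', hjS⟩ := hNP_out hb hbS
      exact ⟨Relation.TransGen.single hF', hjS⟩
    · intro b c h' hcj ih hbS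
      obtain ⟨hF', hcS⟩ := hNP_out h' hbS
      obtain ⟨tg, hjS⟩ := ih hcS
      exact ⟨tg.head hF', hjS⟩
  have hNmid : ∀ {i j}, Relation.TransGen (arcRel N) i j → i ∈ S → i ∉ X →
      (j ∉ X ∧ (j ∈ S → Relation.TransGen (arcRel A) i j)) := by
    intro i j h
    refine Relation.TransGen.head_induction_on
      (motive := fun b (_ : Relation.TransGen (arcRel N) b j) =>
        b ∈ S → b ∉ X → (j ∉ X ∧ (j ∈ S → Relation.TransGen (arcRel A) b j))) h ?_ ?_
    · intro b hb hbS hbX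
      obtain ⟨hA', hjX⟩ := hNP_mid hb hbS hbX
      exact ⟨hjX, fun _ => Relation.TransGen.single hA'⟩
    · intro b c h' hcj ih hbS hbX
      obtain ⟨hA', hcX⟩ := hNP_mid h' hbS hbX
      by_cases hcS : c ∈ S
      · obtain ⟨hjX, hg⟩ := ih hcS hcX
        exact ⟨hjX, fun hjS => (hg hjS).head hA'⟩
      · obtain ⟨-, hjS⟩ := hNout hcj hcS
        exact ⟨fun hjX => hjS (hXS _ hjX), fun h => absurd h hjS⟩
  have hNin : ∀ {i j}, Relation.TransGen (arcRel N) i j → i ∈ X → j ∈ X →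
      Relation.TransGen (arcRel F) i j := by
    intro i j h
    refine Relation.TransGen.head_induction_on
      (motive := fun b (_ : Relation.TransGen (arcRel N) b j) =>
        b ∈ X → j ∈ X → Relation.TransGen (arcRel F) b j) h ?_ ?_
    · intro b hb hbX hjX
      exact Relation.TransGen.single (hNP_in hb hbX).1
    · intro b c h' hcj ih hbX hjX
      obtain ⟨hF', hcS⟩ := hNP_in h' hbX
      by_cases hcX : c ∈ X
      · exact (ih hcX hjX).head hF'
      · exact absurd hjX (hNmid hcj hcS hcX).1
  have hNacyc : ∀ i, ¬ Relation.TransGen (arcRel N) i i := by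
    intro i hi
    by_cases hiS : i ∈ S
    · by_cases hiX : i ∈ X
      · exact hacyc i (hNin hi hiX hiX)
      · exact hAacyc i ((hNmid hi hiS hiX).2 hiS)
    · exact hacyc i (hNout hi hiS).1
  have hNroot : rootSet N = rootSet F := by
    ext i
    simp only [rootSet, Finset.mem_filter, Finset.mem_univ, true_and]
    constructor
    · intro h j hij
      by_cases hiS : i ∈ S
      · by_cases hiX : i ∈ X
        · exact h j (Finset.mem_union.mpr (Or.inl (Finset.mem_filter.mpr ⟨hij, Or.inr hiX⟩)))
        · exact h (f i) (Finset.mem_union.mpr (Or.inr (Finset.mem_filter.mpr ⟨hfS i hiS, hiS, hiX⟩)))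
      · exact h j (Finset.mem_union.mpr (Or.inl (Finset.mem_filter.mpr ⟨hij, Or.inl hiS⟩)))
    · intro h j hij
      rcases Finset.mem_union.mp hij with h' | h'
      · exact h j (Finset.mem_filter.mp h').1
      · obtain ⟨hA', hiS, hiX⟩ := Finset.mem_filter.mp h'
        have his : i = s := by
          have hrtg : Relation.ReflTransGen (arcRel F) i s := by
            simpa [hSdef, treeVerts] using hiS
          rcases hrtg.cases_head with h'' | ⟨c, hc, -⟩
          · exact h''
          · exact absurd hc (h c)
        exact hiX (his ▸ hsX)
  have hNk : (rootSet N).card = k := by rw [hNroot]; exact hkcard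
  have hNF : aweight v F ≤ aweight v N := by
    have h1 : ((aweight v F : ℝ) : EReal) ≤ ((aweight v N : ℝ) : EReal) := by
      rw [hmin]
      exact sInf_le ⟨N, ⟨hNsub, ⟨hNfun, hNacyc⟩, hNk⟩, rfl⟩
    exact_mod_cast h1
  -- weight bookkeeping
  have hdisj : Disjoint (F.filter (fun a => a.1 ∉ S ∨ a.1 ∈ X))
      (A.filter (fun a => a.1 ∈ S ∧ a.1 ∉ X)) := by
    rw [Finset.disjoint_left]
    intro a ha hb
    obtain ⟨-, h1⟩ := Finset.mem_filter.mp ha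
    obtain ⟨-, h2, h3⟩ := Finset.mem_filter.mp hb
    rcases h1 with h | h
    · exact h h2
    · exact h3 h
  have hsumN : aweight v N = (∑ a ∈ F.filter (fun a => a.1 ∉ S ∨ a.1 ∈ X), v a.1 a.2) +
      ∑ a ∈ A.filter (fun a => a.1 ∈ S ∧ a.1 ∉ X), v a.1 a.2 := by
    rw [hNdef, aweight, Finset.sum_union hdisj]
  have hsumF : aweight v F = (∑ a ∈ F.filter (fun a => a.1 ∉ S ∨ a.1 ∈ X), v a.1 a.2) +
      ∑ a ∈ F.filter (fun a => a.1 ∈ S ∧ a.1 ∉ X), v a.1 a.2 := by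
    rw [aweight, ← Finset.sum_filter_add_sum_filter_not F (fun a => a.1 ∉ S ∨ a.1 ∈ X)
      (fun a => v a.1 a.2)]
    congr 2
    apply Finset.filter_congr
    intro a _
    constructor
    · intro h
      exact ⟨by_contra fun hn => h (Or.inl hn), fun hX => h (Or.inr hX)⟩
    · rintro ⟨h1, h2⟩ (h | h)
      · exact h h1
      · exact h2 h
  have key : ∑ a ∈ F.filter (fun a => a.1 ∈ S ∧ a.1 ∉ X), v a.1 a.2 ≤
      ∑ a ∈ A.filter (fun a => a.1 ∈ S ∧ a.1 ∉ X), v a.1 a.2 := by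
    rw [hsumN, hsumF] at hNF
    linarith
  -- the candidate tree and its weight
  have hdisj2 : Disjoint (A.filter (fun a => a.1 ∈ X ∧ a.1 ≠ q))
      (F.filter (fun a => a.1 ∈ S ∧ a.1 ∉ X)) := by
    rw [Finset.disjoint_left]
    intro a ha hb
    exact (Finset.mem_filter.mp hb).2.2 (Finset.mem_filter.mp ha).2.1
  have hsumT : aweight v (insert (q, f q) T') =
      v q (f q) + ((∑ a ∈ A.filter (fun a => a.1 ∈ X ∧ a.1 ≠ q), v a.1 a.2) +
        ∑ a ∈ F.filter (fun a => a.1 ∈ S ∧ a.1 ∉ X), v a.1 a.2) := by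
    rw [aweight, Finset.sum_insert (hT'qno (f q)), hT'def, Finset.sum_union hdisj2]
  have hSXfil : A.filter (fun a => a.1 ∈ S ∧ a.1 ∈ X) =
      insert (q, f q) (A.filter (fun a => a.1 ∈ X ∧ a.1 ≠ q)) := by
    ext ⟨i, j⟩
    simp only [Finset.mem_filter, Finset.mem_insert]
    constructor
    · rintro ⟨hA', hiS, hiX⟩
      by_cases hiq : i = q
      · subst hiq
        exact Or.inl (by rw [Prod.mk.injEq]; exact ⟨rfl, (hfuniq i j hA').symm ▸ rfl⟩)
      · exact Or.inr ⟨hA', hiX, hiq⟩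
    · rintro (h | ⟨hA', hiX, hiq⟩)
      · rw [Prod.mk.injEq] at h
        rw [h.1, h.2]
        exact ⟨hfS q hqS, hqS, hqX⟩
      · exact ⟨hA', hXS _ hiX, hiX⟩
  have hsplit1 : aweightOn v A S =
      (∑ a ∈ A.filter (fun a => a.1 ∈ S ∧ a.1 ∈ X), v a.1 a.2) +
      ∑ a ∈ A.filter (fun a => a.1 ∈ S ∧ a.1 ∉ X), v a.1 a.2 := by
    rw [aweightOn, ← Finset.sum_filter_add_sum_filter_not (A.filter (fun a => a.1 ∈ S))
      (fun a => a.1 ∈ X) (fun a => v a.1 a.2), Finset.filter_filter, Finset.filter_filter]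
  have hsum2 : ∑ a ∈ A.filter (fun a => a.1 ∈ S ∧ a.1 ∈ X), v a.1 a.2 =
      v q (f q) + ∑ a ∈ A.filter (fun a => a.1 ∈ X ∧ a.1 ≠ q), v a.1 a.2 := by
    rw [hSXfil, Finset.sum_insert (by
      simp only [Finset.mem_filter]
      rintro ⟨-, -, h⟩
      exact h rfl)]
  refine ⟨_, ⟨insert (q, f q) T', ⟨q, hqS, f q, hqexit, T', hTree, hAE (hfS q hqS), rfl⟩, rfl⟩, ?_⟩
  show ((aweight v (insert (q, f q) T') : ℝ) : EReal) ≤ ((aweightOn v A S : ℝ) : EReal)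
  have : aweight v (insert (q, f q) T') ≤ aweightOn v A S := by
    rw [hsumT, hsplit1, hsum2]
    linarith
  exact_mod_cast this
/-- Theorem 1.  If `F` is a minimal spanning entering forest with `k`
trees and `s` is one of its roots, then `μ^∘_S = λ^∘_S` where `S = V(T^F_s)`. -/
theorem statement0 (v : α → α → ℝ) (E : Finset (α × α)) (hE : ∀ i, (i, i) ∉ E)
    (k : ℕ) (F : Finset (α × α)) (hF : IsMinForest v E k F)
    (s : α) (hs : s ∈ rootSet F) :
    muCirc v E (treeVerts F s) = lamCirc v E (treeVerts F s) := by
  have hroot : ∀ j, (s, j) ∉ F := by simpa [rootSet] using hs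
  exact le_antisymm
    (muCirc_le_lamCirc v E F hF.1.1 hF.1.2.1.1 hF.1.2.1.2 s hroot)
    (lamCirc_le_muCirc v E k F hF s hs)

end BarrierForests
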